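/- Let G be a finite p-group of maximal class (coclass 1) and order pⁿ with n ≥ 4. Then the two-step centralizer χ₂(G) = {g ∈ G : [g,h] ∈ γ₄(G) for all h ∈ γ₂(G)} is a maximal subgroup of G. -/

import Mathlib

open Subgroup commutatorElement

section Helpers

variable {G : Type*} [Group G]

private lemma my_card_map_mk' (N H : Subgroup G) [N.Normal] :
    Nat.card (H.map (QuotientGroup.mk' N)) = N.relIndex H := by
  have hsurj := (QuotientGroup.mk' N).subgroupMap_surjective H
  have hker : ((QuotientGroup.mk' N).subgroupMap H).ker = N.subgroupOf H := by
    ext x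
    rw [MonoidHom.mem_ker, Subgroup.mem_subgroupOf, Subtype.ext_iff]
    exact QuotientGroup.eq_one_iff (x : G)
  calc Nat.card (H.map (QuotientGroup.mk' N))
      = Nat.card (↥H ⧸ ((QuotientGroup.mk' N).subgroupMap H).ker) :=
        (Nat.card_congr (QuotientGroup.quotientKerEquivOfSurjective _ hsurj).toEquiv).symm
    _ = N.relIndex H := by rw [hker, Subgroup.relIndex, Subgroup.index_eq_card]

private lemma my_lcs_strict [Group.IsNilpotent G] {k : ℕ}
    (hk : k < Group.nilpotencyClass G) :
    Subgroup.lowerCentralSeries (⊤ : Subgroup G) (k + 1) < Subgroup.lowerCentralSeries (⊤ : Subgroup G) k := by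
  rcases lt_or_eq_of_le (Subgroup.lowerCentralSeries_antitone (⊤ : Subgroup G) (Nat.le_succ k)) with h | h
  · exact h
  exfalso
  have hstab : ∀ m, Subgroup.lowerCentralSeries (⊤ : Subgroup G) (k + m) = Subgroup.lowerCentralSeries (⊤ : Subgroup G) k := by
    intro m
    induction m with
    | zero => rfl
    | succ m ih =>
      have h1 : Subgroup.lowerCentralSeries (⊤ : Subgroup G) (k + m + 1) = ⁅Subgroup.lowerCentralSeries (⊤ : Subgroup G) (k + m), ⊤⁆ := rfl
      have h2 : Subgroup.lowerCentralSeries (⊤ : Subgroup G) (k + 1) = ⁅Subgroup.lowerCentralSeries (⊤ : Subgroup G) k, ⊤⁆ := rfl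
      rw [show k + (m+1) = (k+m)+1 by ring, h1, ih, ← h2, h]
  have hbot : Subgroup.lowerCentralSeries (⊤ : Subgroup G) k = ⊥ := by
    have := hstab (Group.nilpotencyClass G - k)
    rw [Nat.add_sub_cancel' hk.le] at this
    rw [← this, Subgroup.lowerCentralSeries_nilpotencyClass]
  exact absurd (Subgroup.lowerCentralSeries_eq_bot_iff_nilpotencyClass_le.mp hbot) (not_le.mpr hk)

private lemma my_comm_mul_left (a b c : G) :
    ⁅a * b, c⁆ = a * ⁅b, c⁆ * a⁻¹ * ⁅a, c⁆ := by
  simp only [commutatorElement_def]; group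

private lemma my_comm_mul_right (a b c : G) :
    ⁅a, b * c⁆ = ⁅a, b⁆ * (b * ⁅a, c⁆ * b⁻¹) := by
  simp only [commutatorElement_def]; group

private lemma my_halg {Q : Type*} [Group Q] (a b : Q) :
    a⁻¹ * b⁻¹ * a * b = 1 ↔ b * a = a * b := by
  constructor
  · intro h1
    have h2 := congrArg (fun x => b * a * x) h1
    simpa [mul_assoc] using h2.symm
  · intro h1
    rw [mul_assoc, ← h1]
    simp [mul_assoc]

private lemma my_mem_iff (N : Subgroup G) [N.Normal] (g h : G) :
    g⁻¹ * h⁻¹ * g * h ∈ N ↔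
      (QuotientGroup.mk' N) h * (QuotientGroup.mk' N) g
        = (QuotientGroup.mk' N) g * (QuotientGroup.mk' N) h := by
  constructor
  · intro h1
    have h2 : (QuotientGroup.mk' N) (g⁻¹ * h⁻¹ * g * h) = 1 :=
      (QuotientGroup.eq_one_iff _).mpr h1
    rw [map_mul, map_mul, map_mul, map_inv, map_inv] at h2
    exact (my_halg _ _).mp h2
  · intro h1
    have h2 : (QuotientGroup.mk' N) (g⁻¹ * h⁻¹ * g * h) = 1 := by
      rw [map_mul, map_mul, map_mul, map_inv, map_inv]
      exact (my_halg _ _).mpr h1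
    exact (QuotientGroup.eq_one_iff _).mp h2

private lemma my_lcs12 {p : ℕ} (hp : p.Prime)
    (h : (Subgroup.lowerCentralSeries (⊤ : Subgroup G) 1).index = p) :
    Subgroup.lowerCentralSeries (⊤ : Subgroup G) 1 ≤ Subgroup.lowerCentralSeries (⊤ : Subgroup G) 2 := by
  haveI : Fact p.Prime := ⟨hp⟩
  set K := Subgroup.lowerCentralSeries (⊤ : Subgroup G) 1 with hK
  haveI : K.Normal := Subgroup.lowerCentralSeries_normal ⊤ 1
  have hcard : Nat.card (G ⧸ K) = p := by rw [← Subgroup.index_eq_card, h]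
  have hKtop : K ≠ ⊤ := by
    intro htop
    rw [htop, Subgroup.index_top] at h
    exact hp.one_lt.ne h
  obtain ⟨x, hx⟩ : ∃ x : G, x ∉ K := by
    by_contra hc
    push_neg at hc
    exact hKtop ((Subgroup.eq_top_iff' K).mpr hc)
  have hxne : (QuotientGroup.mk' K) x ≠ 1 := by
    rw [Ne, ← MonoidHom.mem_ker, QuotientGroup.ker_mk']
    exact hx
  have hgen : ∀ g : G, ∃ (k : ℤ) (m : G), m ∈ K ∧ g = x ^ k * m := by
    intro g
    have htop := zpowers_eq_top_of_prime_card (p := p) hcard hxne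
    have hg : (QuotientGroup.mk' K) g ∈ Subgroup.zpowers ((QuotientGroup.mk' K) x) := by
      rw [htop]; trivial
    obtain ⟨k, hk⟩ := hg
    refine ⟨k, (x ^ k)⁻¹ * g, ?_, by group⟩
    have h1 : (QuotientGroup.mk' K) ((x ^ k)⁻¹ * g) = 1 := by
      rw [map_mul, map_inv, map_zpow]
      rw [show (QuotientGroup.mk' K) x ^ k = (QuotientGroup.mk' K) g from hk]
      group
    rwa [← MonoidHom.mem_ker, QuotientGroup.ker_mk'] at h1
  have h2 : Subgroup.lowerCentralSeries (⊤ : Subgroup G) 2 = ⁅Subgroup.lowerCentralSeries (⊤ : Subgroup G) 1, ⊤⁆ := rfl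
  haveI hnorm2 : (Subgroup.lowerCentralSeries (⊤ : Subgroup G) 2).Normal := Subgroup.lowerCentralSeries_normal ⊤ 2
  have key : ∀ a b : G, ⁅a, b⁆ ∈ Subgroup.lowerCentralSeries (⊤ : Subgroup G) 2 := by
    have hx_comm : ∀ (j : ℤ) (b : G), ⁅x ^ j, b⁆ ∈ Subgroup.lowerCentralSeries (⊤ : Subgroup G) 2 := by
      intro j b
      obtain ⟨k, v, hv, rfl⟩ := hgen b
      rw [my_comm_mul_right]
      have h1 : ⁅x ^ j, x ^ k⁆ = 1 := by
        rw [commutatorElement_eq_one_iff_commute]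
        exact (Commute.refl x).zpow_zpow j k
      rw [h1, one_mul]
      have hmem : ⁅x ^ j, v⁆ ∈ Subgroup.lowerCentralSeries (⊤ : Subgroup G) 2 := by
        have hm1 : ⁅v, x ^ j⁆ ∈ ⁅Subgroup.lowerCentralSeries (⊤ : Subgroup G) 1, (⊤ : Subgroup G)⁆ :=
          Subgroup.commutator_mem_commutator hv (Subgroup.mem_top _)
        rw [← h2] at hm1
        have hm2 := (Subgroup.lowerCentralSeries (⊤ : Subgroup G) 2).inv_mem hm1
        rwa [commutatorElement_inv] at hm2
      exact hnorm2.conj_mem _ hmem _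
    intro a b
    obtain ⟨j, u, hu, rfl⟩ := hgen a
    rw [my_comm_mul_left]
    have h1 : ⁅u, b⁆ ∈ Subgroup.lowerCentralSeries (⊤ : Subgroup G) 2 := by
      rw [h2]; exact Subgroup.commutator_mem_commutator hu (Subgroup.mem_top _)
    exact Subgroup.mul_mem _ (hnorm2.conj_mem _ h1 _) (hx_comm j b)
  exact (Subgroup.commutator_le.mpr fun a _ b _ => key a b : ⁅(⊤ : Subgroup G), ⊤⁆ ≤ _)

private lemma my_relIndex_facts [Finite G] [Group.IsNilpotent G]
    {p n : ℕ} (hp : p.Prime) (hn : 4 ≤ n) (hcard : Nat.card G = p ^ n)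
    (hclass : Group.nilpotencyClass G = n - 1) :
    (Subgroup.lowerCentralSeries (⊤ : Subgroup G) 2).relIndex (Subgroup.lowerCentralSeries (⊤ : Subgroup G) 1) = p ∧
    (Subgroup.lowerCentralSeries (⊤ : Subgroup G) 3).relIndex (Subgroup.lowerCentralSeries (⊤ : Subgroup G) 2) = p := by
  set c := n - 1 with hc
  have hc3 : 3 ≤ c := le_tsub_of_add_le_right hn
  have hcn : c + 1 = n := by omega
  set L := Subgroup.lowerCentralSeries (⊤ : Subgroup G) with hL
  set a : ℕ → ℕ := fun k => (L k).index with ha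
  have ha_dvd : ∀ k, a k ∣ p ^ n := by
    intro k
    have := Subgroup.index_dvd_card (H := L k)
    rwa [hcard] at this
  have ha_ne : ∀ k, a k ≠ 0 := fun k => Subgroup.index_ne_zero_of_finite
  have hstep : ∀ k, (L (k+1)).relIndex (L k) * a k = a (k+1) :=
    fun k => Subgroup.relIndex_mul_index (Subgroup.lowerCentralSeries_antitone ⊤ (Nat.le_succ k))
  have hlt : ∀ k < c, L (k+1) < L k := fun k hk => my_lcs_strict (hclass ▸ hk)
  have hp_dvd_r : ∀ k < c, p ∣ (L (k+1)).relIndex (L k) := by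
    intro k hk
    have hr_dvd : (L (k+1)).relIndex (L k) ∣ p ^ n :=
      dvd_trans ⟨a k, (hstep k).symm⟩ (ha_dvd (k+1))
    obtain ⟨e, he, hre⟩ := (Nat.dvd_prime_pow hp).mp hr_dvd
    have hene : e ≠ 0 := by
      rintro rfl
      rw [pow_zero] at hre
      exact (hlt k hk).not_ge (Subgroup.relIndex_eq_one.mp hre)
    rw [hre]
    exact dvd_pow_self p hene
  have base : p ^ 2 ∣ a 1 := by
    obtain ⟨e, he, hae⟩ := (Nat.dvd_prime_pow hp).mp (ha_dvd 1)
    have he0 : e ≠ 0 := by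
      rintro rfl
      rw [pow_zero] at hae
      have h1 : L 1 = ⊤ := Subgroup.index_eq_one.mp hae
      exact (hlt 0 (by omega)).ne (h1.trans rfl)
    have he1 : e ≠ 1 := by
      rintro rfl
      rw [pow_one] at hae
      exact (hlt 1 (by omega)).not_ge (my_lcs12 hp hae)
    rw [hae]
    exact pow_dvd_pow p (by omega)
  have claimA : ∀ k, 1 ≤ k → k ≤ c → p ^ (k+1) ∣ a k := by
    intro k
    induction k with
    | zero => omega
    | succ k ih =>
      intro _ hk1
      rcases Nat.eq_zero_or_pos k with rfl | hk
      · exact base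
      · have := ih hk (by omega)
        rw [← hstep k, pow_succ']
        exact Nat.mul_dvd_mul (hp_dvd_r k (by omega)) this
  have claimB : ∀ d k, k + d ≤ c → a k * p ^ d ∣ a (k + d) := by
    intro d
    induction d with
    | zero => intro k _; simpa using dvd_refl _
    | succ d ih =>
      intro k hkd
      have h1 : a k * p ^ d ∣ a (k + d) := ih k (by omega)
      have h2 : p ∣ (L (k+d+1)).relIndex (L (k+d)) := hp_dvd_r (k+d) (by omega)
      have h3 : a (k+d) * p ∣ a (k+d+1) := by
        rw [← hstep (k+d), mul_comm]
        exact Nat.mul_dvd_mul h2 dvd_rfl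
      have h4 : a k * p ^ (d+1) ∣ a (k+d) * p := by
        rw [pow_succ, ← mul_assoc]
        exact Nat.mul_dvd_mul h1 dvd_rfl
      rw [show k + (d+1) = k + d + 1 by ring]
      exact h4.trans h3
  have hac : a c = p ^ n := by
    have h1 : L c = ⊥ := by rw [hL, ← hclass]; exact Subgroup.lowerCentralSeries_nilpotencyClass
    rw [ha]; simp only [h1, Subgroup.index_bot, hcard]
  have haval : ∀ k, 1 ≤ k → k ≤ c → a k = p ^ (k+1) := by
    intro k h1 h2
    obtain ⟨g, hg, hag⟩ := (Nat.dvd_prime_pow hp).mp (ha_dvd k)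
    have hge : k + 1 ≤ g := by
      have h3 := claimA k h1 h2
      rw [hag] at h3
      exact (Nat.pow_dvd_pow_iff_le_right hp.one_lt).mp h3
    have hle : g ≤ k + 1 := by
      have hb := claimB (c - k) k (by omega)
      rw [show k + (c - k) = c by omega, hac, hag, ← pow_add] at hb
      have := (Nat.pow_dvd_pow_iff_le_right hp.one_lt).mp hb
      omega
    rw [hag, Nat.le_antisymm hle hge]
  have ha1 : a 1 = p ^ 2 := haval 1 (by omega) (by omega)
  have ha2 : a 2 = p ^ 3 := haval 2 (by omega) (by omega)
  have ha3 : a 3 = p ^ 4 := haval 3 (by omega) (by omega)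
  constructor
  · have h1 := hstep 1
    rw [ha1, ha2] at h1
    have hp2 : (0:ℕ) < p ^ 2 := pow_pos hp.pos 2
    have h2 : (L 2).relIndex (L 1) * p ^ 2 = p * p ^ 2 := by rw [h1]; ring
    exact Nat.eq_of_mul_eq_mul_right hp2 h2
  · have h1 := hstep 2
    rw [ha2, ha3] at h1
    have hp3 : (0:ℕ) < p ^ 3 := pow_pos hp.pos 3
    have h2 : (L 3).relIndex (L 2) * p ^ 3 = p * p ^ 3 := by rw [h1]; ring
    exact Nat.eq_of_mul_eq_mul_right hp3 h2

end Helpers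

/-- For a finite `p`-group `G` of maximal class (coclass `1`) and order `p^n`, `n ≥ 4`,
the two-step centralizer `χ₂(G) = {g ∈ G : [g,h] ∈ γ₄(G) for all h ∈ γ₂(G)}` is a
maximal subgroup of `G`.  Here `γ_i(G) = Subgroup.lowerCentralSeries (⊤ : Subgroup G) (i-1)` and
`[g,h] = g⁻¹h⁻¹gh`. -/
theorem two_step_centralizer_is_maximal (p : ℕ) (hp : p.Prime)
    (G : Type*) [Group G] [Finite G] [Group.IsNilpotent G]
    (n : ℕ) (hn : 4 ≤ n) (hcard : Nat.card G = p ^ n)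
    (hclass : Group.nilpotencyClass G = n - 1) :
    ∃ χ : Subgroup G,
      (∀ g : G, g ∈ χ ↔
        ∀ h ∈ Subgroup.lowerCentralSeries (⊤ : Subgroup G) 1,
          g⁻¹ * h⁻¹ * g * h ∈ Subgroup.lowerCentralSeries (⊤ : Subgroup G) 3) ∧
      IsCoatom χ := by
  haveI : Fact p.Prime := ⟨hp⟩
  obtain ⟨h21, h32⟩ := my_relIndex_facts hp hn hcard hclass
  set L1 := Subgroup.lowerCentralSeries (⊤ : Subgroup G) 1 with hL1
  set L2 := Subgroup.lowerCentralSeries (⊤ : Subgroup G) 2 with hL2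
  set N := Subgroup.lowerCentralSeries (⊤ : Subgroup G) 3 with hN
  haveI : N.Normal := Subgroup.lowerCentralSeries_normal ⊤ 3
  haveI : L2.Normal := Subgroup.lowerCentralSeries_normal ⊤ 2
  set π := QuotientGroup.mk' N with hπ
  set χ : Subgroup G := (Subgroup.centralizer ((L1.map π : Subgroup (G ⧸ N)) : Set (G ⧸ N))).comap π with hχ
  have hNL2 : N ≤ L2 := Subgroup.lowerCentralSeries_antitone ⊤ (Nat.le_succ 2)
  have hL2L1 : L2 ≤ L1 := Subgroup.lowerCentralSeries_antitone ⊤ (Nat.le_succ 1)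
  -- membership characterization
  have hmem : ∀ g : G, g ∈ χ ↔ ∀ h ∈ L1, g⁻¹ * h⁻¹ * g * h ∈ N := by
    intro g
    rw [hχ, Subgroup.mem_comap, Subgroup.mem_centralizer_iff]
    constructor
    · intro hg h hh
      have h1 : π h * π g = π g * π h := hg (π h) (Subgroup.mem_map_of_mem π hh)
      exact (my_mem_iff N g h).mpr h1
    · intro hg y hy
      obtain ⟨h, hh, rfl⟩ := Subgroup.mem_map.mp hy
      exact (my_mem_iff N g h).mp (hg h hh)
  refine ⟨χ, hmem, ?_⟩
  -- commutators with L2 lie in N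
  have hcomm_N : ∀ m ∈ L2, ∀ g : G, ⁅m, g⁆ ∈ N := by
    intro m hm g
    exact Subgroup.commutator_mem_commutator hm (Subgroup.mem_top _)
  -- π of L2 is central in G ⧸ N
  have hcentral : ∀ m ∈ L2, ∀ q : G ⧸ N, q * π m = π m * q := by
    intro m hm q
    obtain ⟨g, rfl⟩ := QuotientGroup.mk'_surjective N q
    have h1 : π ⁅m, g⁆ = 1 := (QuotientGroup.eq_one_iff _).mpr (hcomm_N m hm g)
    rw [map_commutatorElement] at h1
    have h2 : Commute (π m) (π g) := commutatorElement_eq_one_iff_commute.mp h1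
    exact h2.eq.symm
  -- commutators ⁅g, h⁆ with h ∈ L1 lie in L2
  have hcomm_L2 : ∀ g : G, ∀ h ∈ L1, ⁅g, h⁆ ∈ L2 := by
    intro g h hh
    have h1 : ⁅h, g⁆ ∈ ⁅L1, (⊤ : Subgroup G)⁆ :=
      Subgroup.commutator_mem_commutator hh (Subgroup.mem_top _)
    have h2 : ⁅h, g⁆ ∈ L2 := h1
    have h3 := L2.inv_mem h2
    rwa [commutatorElement_inv] at h3
  -- a generator of L1 mod L2
  have hBcard : Nat.card (L1.map (QuotientGroup.mk' L2)) = p := by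
    rw [my_card_map_mk' L2 L1, h21]
  obtain ⟨t, ht1, ht2, hgen⟩ :
      ∃ t, t ∈ L1 ∧ t ∉ L2 ∧ ∀ h ∈ L1, ∃ (k : ℤ) (m : G), m ∈ L2 ∧ h = t ^ k * m := by
    set ρ := QuotientGroup.mk' L2 with hρ
    set B := L1.map ρ with hB
    haveI : Nontrivial B := by
      apply (Finite.one_lt_card_iff_nontrivial (α := B)).mp
      rw [hBcard]
      exact hp.one_lt
    obtain ⟨t', ht'⟩ := exists_ne (1 : B)
    obtain ⟨t, htL1, htt'⟩ := Subgroup.mem_map.mp t'.2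
    have htL2 : t ∉ L2 := by
      intro hc
      apply ht'
      apply Subtype.ext
      rw [← htt']
      exact (QuotientGroup.eq_one_iff t).mpr hc
    refine ⟨t, htL1, htL2, ?_⟩
    intro h hh
    have hzp : Subgroup.zpowers t' = ⊤ := zpowers_eq_top_of_prime_card (p := p) hBcard ht'
    have hh' : (⟨ρ h, Subgroup.mem_map_of_mem ρ hh⟩ : B) ∈ Subgroup.zpowers t' := by
      rw [hzp]; trivial
    obtain ⟨k, hk⟩ := hh'
    refine ⟨k, (t ^ k)⁻¹ * h, ?_, by group⟩
    have h2 : ((t' : G ⧸ L2)) ^ k = ρ h := by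
      have h3 := congrArg (Subtype.val) hk
      simpa using h3
    have h4 : ρ (t ^ k) = ρ h := by rw [map_zpow, htt']; exact h2
    have h1 : ρ ((t ^ k)⁻¹ * h) = 1 := by
      rw [map_mul, map_inv, h4]
      group
    rwa [← MonoidHom.mem_ker, QuotientGroup.ker_mk'] at h1
  -- the subgroup V = π(L2) has order p
  set V := L2.map π with hV
  have hVcard : Nat.card V = p := by
    have h1 := my_card_map_mk' (G := G) N L2
    rw [h32] at h1
    exact h1
  -- the homomorphism φ : g ↦ π ⁅g, t⁆
  have hmapmul : ∀ a b : G, π ⁅a * b, t⁆ = π ⁅a, t⁆ * π ⁅b, t⁆ := by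
    intro a b
    rw [my_comm_mul_left, map_mul, map_mul, map_mul, map_inv]
    have hbt : ⁅b, t⁆ ∈ L2 := hcomm_L2 b t ht1
    rw [hcentral ⁅b, t⁆ hbt (π a), mul_inv_cancel_right]
    exact (hcentral ⁅b, t⁆ hbt (π ⁅a, t⁆)).symm
  set φ : G →* G ⧸ N :=
    { toFun := fun g => π ⁅g, t⁆
      map_one' := by
        show π ⁅(1 : G), t⁆ = 1
        rw [commutatorElement_one_left, map_one]
      map_mul' := hmapmul } with hφ
  have hker : φ.ker = χ := by
    ext g
    rw [MonoidHom.mem_ker, hmem]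
    constructor
    · intro hg h hh
      obtain ⟨k, m, hm, rfl⟩ := hgen h hh
      have hgt : Commute (π g) (π t) := by
        have h1 : π ⁅g, t⁆ = 1 := hg
        rw [map_commutatorElement] at h1
        exact commutatorElement_eq_one_iff_commute.mp h1
      have hgm : Commute (π g) (π m) := by
        show π g * π m = π m * π g
        exact hcentral m hm (π g)
      have hcom : Commute (π g) (π (t ^ k * m)) := by
        rw [map_mul, map_zpow]
        exact (hgt.zpow_right k).mul_right hgm
      exact (my_mem_iff N g _).mpr hcom.eq.symm
    · intro hg
      have h1 : π t * π g = π g * π t := (my_mem_iff N g t).mp (hg t ht1)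
      have h2 : Commute (π g) (π t) := h1.symm
      show π ⁅g, t⁆ = 1
      rw [map_commutatorElement]
      exact commutatorElement_eq_one_iff_commute.mpr h2
  -- χ is proper
  have hχtop : χ ≠ ⊤ := by
    intro htop
    have hle : L2 ≤ N := by
      have h1 : ∀ u ∈ L1, ∀ g : G, ⁅u, g⁆ ∈ N := by
        intro u hu g
        have hgχ : g ∈ χ := htop ▸ Subgroup.mem_top g
        have h2 := (hmem g).mp hgχ u hu
        have h3 := (my_mem_iff N g u).mp h2
        have h4 : Commute (π u) (π g) := h3
        have h5 : π ⁅u, g⁆ = 1 := by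
          rw [map_commutatorElement]
          exact commutatorElement_eq_one_iff_commute.mpr h4
        exact (QuotientGroup.eq_one_iff _).mp h5
      exact (Subgroup.commutator_le.mpr fun u hu g _ => h1 u hu g : ⁅L1, (⊤ : Subgroup G)⁆ ≤ N)
    have h6 : N.relIndex L2 = 1 := Subgroup.relIndex_eq_one.mpr hle
    rw [h32] at h6
    exact hp.one_lt.ne' h6
  -- the index of χ is p
  have hrange : φ.range ≤ V := by
    rintro y ⟨g, rfl⟩
    exact Subgroup.mem_map_of_mem π (hcomm_L2 g t ht1)
  have hindex : χ.index = p := by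
    have h1 : χ.index = Nat.card φ.range := by
      rw [← hker, Subgroup.index_eq_card]
      exact Nat.card_congr (QuotientGroup.quotientKerEquivRange φ).toEquiv
    have h2 : χ.index ∣ p := by
      rw [h1, ← hVcard]
      exact Subgroup.card_dvd_of_le hrange
    rcases (Nat.Prime.eq_one_or_self_of_dvd hp _ h2) with h3 | h3
    · exact absurd (Subgroup.index_eq_one.mp h3) hχtop
    · exact h3
  -- conclude maximality
  constructor
  · exact hχtop
  · intro K hK
    have hle : χ ≤ K := hK.le
    have h1 : χ.relIndex K * K.index = p := by rw [Subgroup.relIndex_mul_index hle, hindex]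
    have h2 : K.index ∣ p := ⟨χ.relIndex K, by rw [← h1]; ring⟩
    rcases Nat.Prime.eq_one_or_self_of_dvd hp _ h2 with h3 | h3
    · exact Subgroup.index_eq_one.mp h3
    · exfalso
      rw [h3] at h1
      have h4 : χ.relIndex K = 1 :=
        Nat.eq_of_mul_eq_mul_right hp.pos (h1.trans (one_mul p).symm)
      exact hK.not_ge (Subgroup.relIndex_eq_one.mp h4)
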